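/- Let 2 ≤ p/q < 4 and let f, g be (p,q)-colourings of a graph G such that g is obtained from f by adding α mod p to the colour of every vertex in a set X ⊆ V(G) (and g is a proper (p,q)-colouring). Then there is a sequence of (p,q)-colourings f = f_0, f_1, ..., f_α = g where each f_{i+1} is obtained from f_i by adding 1 (mod p) to every vertex of X, or each is obtained by subtracting 1 (mod p) from every vertex of X. -/
import Mathlib


/-- A `(p,q)`-colouring of `G` with colours in `ℤ/pℤ`: for every edge `uv` the
difference `f(u) - f(v)` lies (as a residue) in `[q, p-q]`, i.e. the circular
distance between the colours is at least `q`. -/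
def IsZCol {V : Type*} (G : SimpleGraph V) (p q : ℕ) (f : V → ZMod p) : Prop :=
  ∀ ⦃u v : V⦄, G.Adj u v → q ≤ (f u - f v).val ∧ (f u - f v).val ≤ p - q

private lemma neg_mem {p q : ℕ} [NeZero p] (hq : 0 < q) {c : ZMod p}
    (h1 : q ≤ c.val) (h2 : c.val ≤ p - q) : q ≤ (-c).val ∧ (-c).val ≤ p - q := by
  have hc : c ≠ 0 := by
    intro h; rw [h] at h1; simp [ZMod.val_zero] at h1; omega
  have hp : 2 * q ≤ p := by
    have := c.val_lt; omega
  rw [ZMod.neg_val, if_neg hc]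
  omega

/-- For `2 ≤ p/q < 4`: if `g` is a proper `(p,q)`-colouring obtained from a
`(p,q)`-colouring `f` by adding `α (mod p)` to every vertex of `X`, then either every
intermediate colouring obtained by adding `i (mod p)` (`0 ≤ i ≤ α`) on `X` is proper,
or every intermediate colouring obtained by subtracting `i (mod p)` (`0 ≤ i ≤ p-α`)
on `X` is proper. -/
theorem stmt7 {V : Type*} (G : SimpleGraph V) (p q : ℕ)
    (hq : 0 < q) (h2 : 2 * q ≤ p) (h4 : p < 4 * q)
    (f : V → ZMod p) (X : Set V) [DecidablePred (· ∈ X)]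
    (α : ℕ) (hα : 0 < α) (hαp : α < p)
    (hf : IsZCol G p q f)
    (hg : IsZCol G p q (fun v => if v ∈ X then f v + (α : ZMod p) else f v)) :
    (∀ i : ℕ, i ≤ α → IsZCol G p q (fun v => if v ∈ X then f v + (i : ZMod p) else f v)) ∨
    (∀ i : ℕ, i ≤ p - α →
      IsZCol G p q (fun v => if v ∈ X then f v - (i : ZMod p) else f v)) := by
  haveI : NeZero p := ⟨by omega⟩
  have hαval : (α : ZMod p).val = α := ZMod.val_natCast_of_lt hαp
  -- per-edge dichotomy for cross edges (u ∈ X, v ∉ X)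
  have dich : ∀ ⦃u v : V⦄, G.Adj u v → u ∈ X → v ∉ X →
      (f u - f v).val + α ≤ p - q ∨ p + q ≤ (f u - f v).val + α := by
    intro u v huv hu hv
    have hfe := hf huv
    have hge := hg huv
    simp only [if_pos hu, if_neg hv] at hge
    have heq : f u + (α : ZMod p) - f v = (f u - f v) + (α : ZMod p) := by ring
    rw [heq] at hge
    by_cases hc : (f u - f v).val + α < p
    · left
      have hlt2 : (f u - f v).val + (α : ZMod p).val < p := by rw [hαval]; exact hc
      rw [ZMod.val_add_of_lt hlt2, hαval] at hge
      omega
    · right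
      have hlt := (f u - f v).val_lt
      have : ((f u - f v) + (α : ZMod p)).val = (f u - f v).val + α - p := by
        rw [ZMod.val_add, hαval]
        rw [Nat.mod_eq_sub_mod (by omega), Nat.mod_eq_of_lt (by omega)]
      omega
  by_cases hP : ∀ ⦃u v : V⦄, G.Adj u v → u ∈ X → v ∉ X →
      (f u - f v).val + α ≤ p - q
  · left
    intro i hi u v huv
    simp only
    by_cases hu : u ∈ X <;> by_cases hv : v ∈ X <;>
      simp only [if_pos, if_neg, hu, hv, if_true, if_false]
    · have : f u + (i : ZMod p) - (f v + (i : ZMod p)) = f u - f v := by ring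
      rw [this]; exact hf huv
    · have hd := hP huv hu hv
      have hfe := hf huv
      have heq : f u + (i : ZMod p) - f v = (f u - f v) + (i : ZMod p) := by ring
      rw [heq]
      have hival : (i : ZMod p).val = i := ZMod.val_natCast_of_lt (by omega)
      rw [ZMod.val_add_of_lt (by omega)]
      omega
    · have hd := hP huv.symm hv hu
      have hfe := hf huv.symm
      have heq : f u - (f v + (i : ZMod p)) = -((f v - f u) + (i : ZMod p)) := by ring
      rw [heq]
      have hival : (i : ZMod p).val = i := ZMod.val_natCast_of_lt (by omega)
      have hval : ((f v - f u) + (i : ZMod p)).val = (f v - f u).val + i := by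
        rw [ZMod.val_add_of_lt (by omega)]; omega
      exact neg_mem hq (by omega) (by omega)
    · exact hf huv
  · right
    push_neg at hP
    obtain ⟨u₀, v₀, he₀, hu₀, hv₀, hd₀⟩ := hP
    have hbig₀ : p + q ≤ (f u₀ - f v₀).val + α := by
      rcases dich he₀ hu₀ hv₀ with h | h
      · omega
      · exact h
    have hQ : ∀ ⦃u v : V⦄, G.Adj u v → u ∈ X → v ∉ X →
        p + q ≤ (f u - f v).val + α := by
      intro u v huv hu hv
      rcases dich huv hu hv with h | h
      · exfalso
        have h0 := (hf he₀).2
        have h1 := (hf huv).1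
        omega
      · exact h
    intro i hi u v huv
    simp only
    by_cases hu : u ∈ X <;> by_cases hv : v ∈ X <;>
      simp only [if_pos, if_neg, hu, hv, if_true, if_false]
    · have : f u - (i : ZMod p) - (f v - (i : ZMod p)) = f u - f v := by ring
      rw [this]; exact hf huv
    · have hd := hQ huv hu hv
      have hfe := hf huv
      have heq : f u - (i : ZMod p) - f v = (f u - f v) - (i : ZMod p) := by ring
      rw [heq]
      have hival : (i : ZMod p).val = i := ZMod.val_natCast_of_lt (by omega)
      rw [ZMod.val_sub (by omega)]
      omega
    · have hd := hQ huv.symm hv hu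
      have hfe := hf huv.symm
      have heq : f u - (f v - (i : ZMod p)) = -((f v - f u) - (i : ZMod p)) := by ring
      rw [heq]
      have hival : (i : ZMod p).val = i := ZMod.val_natCast_of_lt (by omega)
      have hval : ((f v - f u) - (i : ZMod p)).val = (f v - f u).val - i := by
        rw [ZMod.val_sub (by omega), hival]
      exact neg_mem hq (by omega) (by omega)
    · exact hf huv
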